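/- Let G be a finite connected simple graph on vertex set V with at least two vertices and diameter at most 2. If G has exactly one vertex v of eccentricity 1, then ∂G = V \ {v}; otherwise ∂G = V. -/
import Mathlib


open Finset

variable {V : Type*}

/-- The Steinerberger boundary of a graph. -/
def sBoundary (G : SimpleGraph V) [Fintype V] [DecidableRel G.Adj] : Set V :=
  if Fintype.card V = 1 then Set.univ
  else {v | ∃ u : V, ∑ w ∈ G.neighborFinset v, G.dist w u < G.degree v * G.dist v u}

/-- The eccentricity of a vertex: the maximum distance to another vertex. -/
noncomputable def ecc (G : SimpleGraph V) [Fintype V] (v : V) : ℕ :=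
  Finset.univ.sup fun w => G.dist v w

/-- The diameter of a graph: the maximum eccentricity. -/
noncomputable def gdiam (G : SimpleGraph V) [Fintype V] : ℕ :=
  Finset.univ.sup fun v => ecc G v

lemma dist_le_ecc [Fintype V] (G : SimpleGraph V) (v u : V) : G.dist v u ≤ ecc G v :=
  Finset.le_sup (mem_univ u)

lemma ecc_le_gdiam [Fintype V] (G : SimpleGraph V) (v : V) : ecc G v ≤ gdiam G :=
  Finset.le_sup (mem_univ v)

lemma exists_dist_eq_ecc [Fintype V] [Nonempty V] (G : SimpleGraph V) (v : V) :
    ∃ u, G.dist v u = ecc G v := by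
  obtain ⟨u, _, hu⟩ := Finset.exists_mem_eq_sup univ univ_nonempty (fun w => G.dist v w)
  exact ⟨u, hu.symm⟩

lemma one_le_ecc [Fintype V] (G : SimpleGraph V) (hc : G.Connected)
    (h2 : 2 ≤ Fintype.card V) (v : V) : 1 ≤ ecc G v := by
  obtain ⟨u, hu⟩ := Fintype.exists_ne_of_one_lt_card (by omega) v
  calc 1 ≤ G.dist v u := hc.pos_dist_of_ne (Ne.symm hu)
    _ ≤ ecc G v := dist_le_ecc G v u

lemma dist_eq_one_of_ecc_eq_one [Fintype V] (G : SimpleGraph V) (hc : G.Connected)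
    {v : V} (hv : ecc G v = 1) {u : V} (hu : u ≠ v) : G.dist v u = 1 := by
  have h1 : G.dist v u ≤ 1 := hv ▸ dist_le_ecc G v u
  have h2 : 1 ≤ G.dist v u := hc.pos_dist_of_ne (Ne.symm hu)
  omega

lemma neighborFinset_of_ecc_eq_one [Fintype V] [DecidableEq V] (G : SimpleGraph V) [DecidableRel G.Adj]
    (hc : G.Connected) {v : V} (hv : ecc G v = 1) :
    G.neighborFinset v = univ.erase v := by
  ext w
  simp only [SimpleGraph.mem_neighborFinset, mem_erase, mem_univ, and_true]
  constructor
  · exact fun h => (G.ne_of_adj h).symm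
  · intro h
    exact SimpleGraph.dist_eq_one_iff_adj.mp (dist_eq_one_of_ecc_eq_one G hc hv h)

/-- Fact A: a vertex at distance 2 from some vertex is in the boundary. -/
lemma memA [Fintype V] (G : SimpleGraph V) [DecidableRel G.Adj]
    (hc : G.Connected) (hdiam : gdiam G ≤ 2) {v u : V} (hvu : G.dist v u = 2) :
    ∑ w ∈ G.neighborFinset v, G.dist w u < G.degree v * G.dist v u := by
  obtain ⟨p, hp⟩ := (hc.exists_walk_length_eq_dist v u)
  rw [hvu] at hp
  cases p with
  | nil => simp at hp
  | @cons _ b _ h q =>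
    rw [SimpleGraph.Walk.length_cons] at hp
    have hq : q.length = 1 := by omega
    have hbu : G.dist b u ≤ 1 := hq ▸ SimpleGraph.dist_le q
    have hlt : ∑ w ∈ G.neighborFinset v, G.dist w u
        < ∑ w ∈ G.neighborFinset v, 2 := by
      apply Finset.sum_lt_sum
      · intro i _
        calc G.dist i u ≤ ecc G i := dist_le_ecc G i u
          _ ≤ gdiam G := ecc_le_gdiam G i
          _ ≤ 2 := hdiam
      · exact ⟨b, (SimpleGraph.mem_neighborFinset G v b).mpr h, by omega⟩
    rw [Finset.sum_const, smul_eq_mul, SimpleGraph.card_neighborFinset_eq_degree] at hlt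
    rw [hvu]
    exact hlt

/-- Fact B: a vertex of eccentricity 1 is in the boundary if there is another one. -/
lemma memB [Fintype V] [DecidableEq V] (G : SimpleGraph V) [DecidableRel G.Adj]
    (hc : G.Connected) {v t : V} (hv : ecc G v = 1) (ht : ecc G t = 1) (hvt : t ≠ v) :
    ∑ w ∈ G.neighborFinset v, G.dist w t < G.degree v * G.dist v t := by
  have hdvt : G.dist v t = 1 := dist_eq_one_of_ecc_eq_one G hc hv hvt
  have hlt : ∑ w ∈ G.neighborFinset v, G.dist w t
      < ∑ w ∈ G.neighborFinset v, 1 := by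
    apply Finset.sum_lt_sum
    · intro i _
      rcases eq_or_ne i t with rfl | hne
      · rw [SimpleGraph.dist_self]; omega
      · rw [SimpleGraph.dist_comm]
        exact le_of_eq (dist_eq_one_of_ecc_eq_one G hc ht hne)
    · refine ⟨t, ?_, by rw [SimpleGraph.dist_self]; omega⟩
      rw [neighborFinset_of_ecc_eq_one G hc hv]
      exact mem_erase.mpr ⟨hvt, mem_univ t⟩
  rw [Finset.sum_const, smul_eq_mul, mul_one, SimpleGraph.card_neighborFinset_eq_degree] at hlt
  rw [hdvt, mul_one]
  exact hlt

/-- Fact C: the unique vertex of eccentricity 1 is not in the boundary. -/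
lemma memC [Fintype V] [DecidableEq V] (G : SimpleGraph V) [DecidableRel G.Adj]
    (hc : G.Connected) (h2 : 2 ≤ Fintype.card V) (hdiam : gdiam G ≤ 2)
    {v : V} (hv : ecc G v = 1) (huniq : ∀ y, ecc G y = 1 → y = v) (u : V) :
    ¬ ∑ w ∈ G.neighborFinset v, G.dist w u < G.degree v * G.dist v u := by
  have : Nonempty V := Fintype.card_pos_iff.mp (by omega)
  rcases eq_or_ne u v with rfl | huv
  · simp [SimpleGraph.dist_self]
  have hdvu : G.dist v u = 1 := dist_eq_one_of_ecc_eq_one G hc hv huv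
  -- u has eccentricity 2
  have heu : ecc G u = 2 := by
    have h1 := one_le_ecc G hc h2 u
    have h2' := (ecc_le_gdiam G u).trans hdiam
    have h3 : ecc G u ≠ 1 := fun h => huv (huniq u h)
    omega
  obtain ⟨z, hz⟩ := exists_dist_eq_ecc G u
  rw [heu] at hz
  have hzu : z ≠ u := by rintro rfl; simp [SimpleGraph.dist_self] at hz
  have hzv : z ≠ v := by
    rintro rfl
    rw [SimpleGraph.dist_comm] at hz
    omega
  have hN := neighborFinset_of_ecc_eq_one G hc hv
  have hzN : z ∈ G.neighborFinset v := by rw [hN]; exact mem_erase.mpr ⟨hzv, mem_univ z⟩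
  have huN : u ∈ (G.neighborFinset v).erase z :=
    mem_erase.mpr ⟨(Ne.symm hzu), by rw [hN]; exact mem_erase.mpr ⟨huv, mem_univ u⟩⟩
  have hsum : ∑ w ∈ G.neighborFinset v, G.dist w u
      = G.dist z u + (G.dist u u +
        ∑ w ∈ ((G.neighborFinset v).erase z).erase u, G.dist w u) := by
    rw [← Finset.add_sum_erase _ (fun w => G.dist w u) hzN,
      ← Finset.add_sum_erase _ (fun w => G.dist w u) huN]
  have hrest : (((G.neighborFinset v).erase z).erase u).card
      ≤ ∑ w ∈ ((G.neighborFinset v).erase z).erase u, G.dist w u := by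
    have h := Finset.card_nsmul_le_sum (((G.neighborFinset v).erase z).erase u)
      (fun w => G.dist w u) 1 (fun x hx => by
        have hxu : x ≠ u := (mem_erase.mp hx).1
        show 1 ≤ G.dist x u
        rw [SimpleGraph.dist_comm]
        exact hc.pos_dist_of_ne (Ne.symm hxu))
    simpa using h
  have hcard : (((G.neighborFinset v).erase z).erase u).card = G.degree v - 2 := by
    rw [Finset.card_erase_of_mem huN, Finset.card_erase_of_mem hzN]
    rfl
  have hdeg2 : 2 ≤ G.degree v := by
    have h1 : 1 < (G.neighborFinset v).card :=
      Finset.one_lt_card.mpr ⟨z, hzN, u, (mem_erase.mp huN).2, hzu⟩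
    rwa [SimpleGraph.card_neighborFinset_eq_degree] at h1
  have hz' : G.dist z u = 2 := by rw [SimpleGraph.dist_comm]; exact hz
  rw [hsum, hdvu, mul_one, SimpleGraph.dist_self, hz']
  omega

theorem sBoundary_of_diam_le_two [Fintype V] (G : SimpleGraph V) [DecidableRel G.Adj]
    (hc : G.Connected) (h2 : 2 ≤ Fintype.card V) (hdiam : gdiam G ≤ 2) :
    ((∃! v : V, ecc G v = 1) → ∀ v : V, ecc G v = 1 → sBoundary G = {w : V | w ≠ v}) ∧
    (¬ (∃! v : V, ecc G v = 1) → sBoundary G = Set.univ) := by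
  classical
  have : Nonempty V := Fintype.card_pos_iff.mp (by omega)
  have hcard1 : Fintype.card V ≠ 1 := by omega
  have hB : sBoundary G =
      {v | ∃ u : V, ∑ w ∈ G.neighborFinset v, G.dist w u < G.degree v * G.dist v u} := by
    simp [sBoundary, hcard1]
  have hecc2 : ∀ w : V, ecc G w ≠ 1 → ∃ u, G.dist w u = 2 := by
    intro w hw
    have h1 := one_le_ecc G hc h2 w
    have h2' := (ecc_le_gdiam G w).trans hdiam
    obtain ⟨u, hu⟩ := exists_dist_eq_ecc G w
    exact ⟨u, by omega⟩
  constructor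
  · rintro ⟨v₀, hv₀, huniq⟩ v hv
    have hveq : v = v₀ := huniq v hv
    subst hveq
    rw [hB]
    ext w
    simp only [Set.mem_setOf_eq]
    constructor
    · rintro ⟨u, hu⟩ rfl
      exact memC G hc h2 hdiam hv huniq u hu
    · intro hw
      have hw1 : ecc G w ≠ 1 := fun h => hw (huniq w h)
      obtain ⟨u, hu⟩ := hecc2 w hw1
      exact ⟨u, memA G hc hdiam hu⟩
  · intro hn
    rw [hB]
    ext w
    simp only [Set.mem_setOf_eq, Set.mem_univ, iff_true]
    rcases eq_or_ne (ecc G w) 1 with hw | hw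
    · have : ∃ t, ecc G t = 1 ∧ t ≠ w := by
        by_contra hcon
        push_neg at hcon
        exact hn ⟨w, hw, fun y hy => hcon y hy⟩
      obtain ⟨t, ht, htw⟩ := this
      exact ⟨t, memB G hc hw ht htw⟩
    · obtain ⟨u, hu⟩ := hecc2 w hw
      exact ⟨u, memA G hc hdiam hu⟩
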